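/- Katakernel Lemma, part 2: Let A be an additive abelian group and let Γ, Δ be two prerings of endogenies of A such that every γ ∈ Γ commutes sharply with every δ ∈ Δ. Then the bi-katakernel Kat(Γ, Δ) := Kat(Γ) + Kat(Δ) is fully Γ-invariant and fully Δ-invariant: φ[Kat(Γ, Δ)] ⊆ Kat(Γ, Δ) for every φ ∈ Γ ∪ Δ. -/

import Mathlib

open Pointwise

variable {A : Type*} [AddCommGroup A]

/-- The fibre `γ[a]` of a relation `γ ⊆ A × A` over `a`. -/
def fib (γ : Set (A × A)) (a : A) : Set A := {b | (a, b) ∈ γ}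

/-- The image `γ[S]` of a set `S ⊆ A` under a relation `γ ⊆ A × A`. -/
def eimg (γ : Set (A × A)) (S : Set A) : Set A := {b | ∃ a ∈ S, (a, b) ∈ γ}

/-- The katakernel `kat γ = γ[0]`. -/
def kat (γ : Set (A × A)) : Set A := {b | ((0 : A), b) ∈ γ}

/-- The image `im γ = γ[A]`. -/
def eim (γ : Set (A × A)) : Set A := {b | ∃ a, (a, b) ∈ γ}

/-- `γ` is (the carrier of) an additive subgroup of `A × A`. -/
def IsAddSubgroupSet (γ : Set (A × A)) : Prop :=
  (0 : A × A) ∈ γ ∧ (∀ p ∈ γ, ∀ q ∈ γ, p + q ∈ γ) ∧ (∀ p ∈ γ, -p ∈ γ)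

/-- An endogeny of `A`: an additive subgroup of `A × A` projecting onto `A`
with finite katakernel. -/
def IsEndogeny (γ : Set (A × A)) : Prop :=
  IsAddSubgroupSet γ ∧ (∀ a : A, ∃ b : A, (a, b) ∈ γ) ∧ (kat γ).Finite

/-- Pointwise sum of endogenies. -/
def esum (γ₁ γ₂ : Set (A × A)) : Set (A × A) :=
  {p | ∃ b₁ b₂ : A, (p.1, b₁) ∈ γ₁ ∧ (p.1, b₂) ∈ γ₂ ∧ p.2 = b₁ + b₂}

/-- Pointwise negation of an endogeny. -/
def eneg (γ : Set (A × A)) : Set (A × A) := {p | (p.1, -p.2) ∈ γ}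

/-- Pointwise difference of endogenies. -/
def esub (γ₁ γ₂ : Set (A × A)) : Set (A × A) := esum γ₁ (eneg γ₂)

/-- Composition of endogenies (as relations): `(a, c) ∈ γ₁ ∘ γ₂` iff
`∃ b, b ∈ γ₂[a]` and `c ∈ γ₁[b]`. -/
def ecomp (γ₁ γ₂ : Set (A × A)) : Set (A × A) :=
  {p | ∃ b : A, (p.1, b) ∈ γ₂ ∧ (b, p.2) ∈ γ₁}

/-- Sharp commutation: `im (γ ∘ δ − δ ∘ γ) ⊆ kat γ + kat δ`. -/
def SharpCommute (γ δ : Set (A × A)) : Prop :=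
  eim (esub (ecomp γ δ) (ecomp δ γ)) ⊆ kat γ + kat δ

/-- Equivalence of endogenies: they agree modulo a finite subgroup. -/
def EEquiv (γ₁ γ₂ : Set (A × A)) : Prop :=
  ∃ F : AddSubgroup A, (F : Set A).Finite ∧
    ∀ a : A, fib γ₁ a + (F : Set A) = fib γ₂ a + (F : Set A)

/-- A prering of endogenies: a set of endogenies closed under `+`, `−` and `∘`. -/
def IsPrering (Γ : Set (Set (A × A))) : Prop :=
  (∀ γ ∈ Γ, IsEndogeny γ) ∧ (∀ γ ∈ Γ, ∀ δ ∈ Γ, esum γ δ ∈ Γ) ∧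
  (∀ γ ∈ Γ, eneg γ ∈ Γ) ∧ (∀ γ ∈ Γ, ∀ δ ∈ Γ, ecomp γ δ ∈ Γ)

/-- The katakernel of a prering: the subgroup generated by all the katakernels. -/
def Kat (Γ : Set (Set (A × A))) : AddSubgroup A :=
  AddSubgroup.closure (⋃ γ ∈ Γ, kat γ)

/-- Katakernel Lemma, part 2: if `Γ` and `Δ` are sharply
commuting prerings, the bi-katakernel `Kat(Γ, Δ) = Kat(Γ) + Kat(Δ)` is fully
`Γ`- and `Δ`-invariant. -/
theorem bikat_fully_invariant (Γ Δ : Set (Set (A × A)))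
    (hΓ : IsPrering Γ) (hΔ : IsPrering Δ)
    (hc : ∀ γ ∈ Γ, ∀ δ ∈ Δ, SharpCommute γ δ) :
    ∀ φ ∈ Γ ∪ Δ, eimg φ ((Kat Γ ⊔ Kat Δ : AddSubgroup A) : Set A) ⊆
      ((Kat Γ ⊔ Kat Δ : AddSubgroup A) : Set A) := by
  set K : AddSubgroup A := Kat Γ ⊔ Kat Δ with hK
  have hkatΓ : ∀ ψ ∈ Γ, kat ψ ⊆ (K : Set A) := fun ψ hψ x hx =>
    (le_sup_left : Kat Γ ≤ K) (AddSubgroup.subset_closure (Set.mem_biUnion hψ hx))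
  have hkatΔ : ∀ ψ ∈ Δ, kat ψ ⊆ (K : Set A) := fun ψ hψ x hx =>
    (le_sup_right : Kat Δ ≤ K) (AddSubgroup.subset_closure (Set.mem_biUnion hψ hx))
  have hKeq : (K : AddSubgroup A)
      = AddSubgroup.closure ((⋃ γ ∈ Γ, kat γ) ∪ ⋃ δ ∈ Δ, kat δ) := by
    rw [AddSubgroup.closure_union]; rfl
  -- zero membership for any endogeny
  have hzero : ∀ ψ, ψ ∈ Γ ∪ Δ → ((0 : A), (0 : A)) ∈ ψ := by
    intro ψ hψ
    have h : IsEndogeny ψ := hψ.elim (fun h => hΓ.1 ψ h) (fun h => hΔ.1 ψ h)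
    exact h.1.1
  intro φ hφ b hb
  obtain ⟨a, haK, hab⟩ := hb
  have hφend : IsEndogeny φ := hφ.elim (fun h => hΓ.1 φ h) (fun h => hΔ.1 φ h)
  obtain ⟨⟨hφ0, hφadd, hφneg⟩, hφsurj, _⟩ := hφend
  have main : ∀ a ∈ K, ∀ b, (a, b) ∈ φ → b ∈ K := by
    intro a ha
    rw [hKeq] at ha
    induction ha using AddSubgroup.closure_induction with
    | mem x hx =>
      intro b hb
      rcases hx with hx | hx
      · -- x ∈ kat ψ for some ψ ∈ Γ
        obtain ⟨ψ, hψ, hxψ⟩ := Set.mem_iUnion₂.mp hx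
        rcases hφ with hφΓ | hφΔ
        · -- φ ∈ Γ : b ∈ kat (φ ∘ ψ) ∈ Γ
          exact hkatΓ _ (hΓ.2.2.2 φ hφΓ ψ hψ) ⟨x, hxψ, hb⟩
        · -- φ ∈ Δ, ψ ∈ Γ : use sharp commutation on -b
          have hmem : -b ∈ eim (esub (ecomp ψ φ) (ecomp φ ψ)) := by
            refine ⟨0, 0, -b, ⟨0, hzero φ (Or.inr hφΔ), hzero ψ (Or.inl hψ)⟩, ?_, by abel⟩
            show ((0 : A), -(-b)) ∈ ecomp φ ψ
            rw [neg_neg]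
            exact ⟨x, hxψ, hb⟩
          have h2 := hc ψ hψ φ hφΔ hmem
          obtain ⟨u, hu, v, hv, huv⟩ := Set.mem_add.mp h2
          have : -b ∈ K := huv ▸ add_mem (hkatΓ ψ hψ hu) (hkatΔ φ hφΔ hv)
          simpa using neg_mem this
      · -- x ∈ kat ψ for some ψ ∈ Δ
        obtain ⟨ψ, hψ, hxψ⟩ := Set.mem_iUnion₂.mp hx
        rcases hφ with hφΓ | hφΔ
        · -- φ ∈ Γ, ψ ∈ Δ : sharp commutation directly
          have hmem : b ∈ eim (esub (ecomp φ ψ) (ecomp ψ φ)) := by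
            refine ⟨0, b, 0, ⟨x, hxψ, hb⟩, ?_, by abel⟩
            show ((0 : A), -(0 : A)) ∈ ecomp ψ φ
            rw [neg_zero]
            exact ⟨0, hzero φ (Or.inl hφΓ), hzero ψ (Or.inr hψ)⟩
          have h2 := hc φ hφΓ ψ hψ hmem
          obtain ⟨u, hu, v, hv, huv⟩ := Set.mem_add.mp h2
          exact huv ▸ add_mem (hkatΓ φ hφΓ hu) (hkatΔ ψ hψ hv)
        · -- φ ∈ Δ : b ∈ kat (φ ∘ ψ) ∈ Δ
          exact hkatΔ _ (hΔ.2.2.2 φ hφΔ ψ hψ) ⟨x, hxψ, hb⟩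
    | zero =>
      intro b hb
      rcases hφ with hφΓ | hφΔ
      · exact hkatΓ φ hφΓ hb
      · exact hkatΔ φ hφΔ hb
    | add x y hx hy ihx ihy =>
      intro b hb
      obtain ⟨b₁, hb₁⟩ := hφsurj x
      have h2 := hφadd _ hb _ (hφneg (x, b₁) hb₁)
      have hy' : (y, b - b₁) ∈ φ := by
        have he : ((x + y, b) + -(x, b₁) : A × A) = (y, b - b₁) := by
          simp only [Prod.neg_mk, Prod.mk_add_mk, Prod.mk.injEq]
          constructor <;> abel
        rwa [he] at h2
      have hb' : b = b₁ + (b - b₁) := by abel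
      rw [hb']
      exact add_mem (ihx b₁ hb₁) (ihy _ hy')
    | neg x hx ih =>
      intro b hb
      have h2 : (x, -b) ∈ φ := by
        have := hφneg (-x, b) hb
        simpa using this
      simpa using neg_mem (ih _ h2)
  exact main a haK b hab
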